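/- Let M be an N×N complex matrix, h ∈ ℂᴺ, and 1 ≤ K ≤ N. Let P be the real diagonal N×N matrix whose first K diagonal entries are 1 and whose remaining entries are 0, and set D := ‖Ph‖²·I_N + ‖h‖²·P (a real diagonal matrix, where ‖Ph‖² = Σ_{i≤K}|hᵢ|² and ‖h‖² = Σᵢ|hᵢ|²). Then the complex equation M·h = (h*·hᴴ·P + P·h*·hᴴ)·h holds if and only if the real equation Φ{M}·z_h = [[D, 0], [0, D]]·z_h holds. -/
import Mathlib


open Matrix

/-- The real `2n×2n` block matrix `Φ{M} = [[Re M, -Im M], [-Im M, -Re M]]`. -/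
def PhiMap {n : ℕ} (M : Matrix (Fin n) (Fin n) ℂ) :
    Matrix (Fin n ⊕ Fin n) (Fin n ⊕ Fin n) ℝ :=
  Matrix.fromBlocks (M.map Complex.re) (-(M.map Complex.im))
    (-(M.map Complex.im)) (-(M.map Complex.re))

/-- The realification `z_h = (Re h; Im h)` of a complex vector `h`. -/
def realify {n : ℕ} (h : Fin n → ℂ) : Fin n ⊕ Fin n → ℝ :=
  Sum.elim (fun i => (h i).re) (fun i => (h i).im)

/-- Equivalence between the complex critical-point system (eq. (15)) and its
real-domain form (eq. (16)): with `P = E_K E_Kᵀ` the diagonal 0/1 projection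
matrix onto the first `K` coordinates and
`D = ‖Ph‖² I_N + ‖h‖² P`, the complex equation
`M h = (h* hᴴ P + P h* hᴴ) h` holds iff `Φ{M} z_h = [[D,0],[0,D]] z_h`. -/
theorem complex_critical_point_iff_real
    {N : ℕ} (M : Matrix (Fin N) (Fin N) ℂ) (h : Fin N → ℂ)
    (K : ℕ) (hK1 : 1 ≤ K) (hKN : K ≤ N)
    (P : Matrix (Fin N) (Fin N) ℂ)
    (hP : P = Matrix.diagonal (fun i : Fin N => if (i : ℕ) < K then 1 else 0))
    (A : Matrix (Fin N) (Fin N) ℂ)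
    (hA : A = Matrix.of (fun i j : Fin N =>
      (starRingEnd ℂ) (h i) * (starRingEnd ℂ) (h j)))
    (D : Matrix (Fin N) (Fin N) ℝ)
    (hD : D = Matrix.diagonal (fun i : Fin N =>
      (∑ l : Fin N, if (l : ℕ) < K then Complex.normSq (h l) else 0)
        + if (i : ℕ) < K then (∑ l : Fin N, Complex.normSq (h l)) else 0)) :
    M.mulVec h = (A * P + P * A).mulVec h ↔
      (PhiMap M).mulVec (realify h)
        = (Matrix.fromBlocks D 0 0 D).mulVec (realify h) := by
  set d : Fin N → ℝ := fun i =>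
    (∑ l : Fin N, if (l : ℕ) < K then Complex.normSq (h l) else 0)
      + if (i : ℕ) < K then (∑ l : Fin N, Complex.normSq (h l)) else 0 with hd
  have hDd : D = Matrix.diagonal d := hD
  -- complex RHS computation
  have hRHSc : ∀ i, ((A * P + P * A).mulVec h) i
      = (d i : ℂ) * (starRingEnd ℂ) (h i) := by
    intro i
    rw [hA, hP]
    simp only [Matrix.mulVec, dotProduct, Matrix.add_apply,
      Matrix.mul_diagonal, Matrix.diagonal_mul, Matrix.of_apply, add_mul,
      Finset.sum_add_distrib]
    have e1 : (∑ j, (starRingEnd ℂ) (h i) * (starRingEnd ℂ) (h j)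
          * (if (j : ℕ) < K then (1 : ℂ) else 0) * h j)
        = (∑ j : Fin N, if (j : ℕ) < K then ((Complex.normSq (h j) : ℂ)) else 0)
            * (starRingEnd ℂ) (h i) := by
      rw [Finset.sum_mul]
      refine Finset.sum_congr rfl fun j _ => ?_
      by_cases hj : (j : ℕ) < K
      · simp only [if_pos hj, mul_one]
        rw [Complex.normSq_eq_conj_mul_self]; ring
      · simp [hj]
    have e2 : (∑ j, (if (i : ℕ) < K then (1 : ℂ) else 0)
          * ((starRingEnd ℂ) (h i) * (starRingEnd ℂ) (h j)) * h j)
        = (if (i : ℕ) < K then ((∑ l : Fin N, Complex.normSq (h l) : ℝ) : ℂ) else 0)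
            * (starRingEnd ℂ) (h i) := by
      by_cases hi : (i : ℕ) < K
      · simp only [if_pos hi, one_mul]
        push_cast
        rw [Finset.sum_mul]
        refine Finset.sum_congr rfl fun j _ => ?_
        rw [Complex.normSq_eq_conj_mul_self]; ring
      · simp [hi]
    rw [e1, e2, hd]
    push_cast [apply_ite (fun x : ℝ => (x : ℂ))]
    ring
  -- real LHS computation
  have hΦ : ∀ p, (PhiMap M).mulVec (realify h) p
      = Sum.elim (fun i => (M.mulVec h i).re) (fun i => -((M.mulVec h i).im)) p := by
    intro p
    cases p with
    | inl i =>
      simp only [PhiMap, Matrix.mulVec, dotProduct, realify, Fintype.sum_sum_type,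
        Matrix.fromBlocks_apply₁₁, Matrix.fromBlocks_apply₁₂, Sum.elim_inl,
        Sum.elim_inr, Matrix.map_apply, Matrix.neg_apply]
      rw [Complex.re_sum, ← Finset.sum_add_distrib]
      refine Finset.sum_congr rfl fun j _ => ?_
      rw [Complex.mul_re]; ring
    | inr i =>
      simp only [PhiMap, Matrix.mulVec, dotProduct, realify, Fintype.sum_sum_type,
        Matrix.fromBlocks_apply₂₁, Matrix.fromBlocks_apply₂₂, Sum.elim_inl,
        Sum.elim_inr, Matrix.map_apply, Matrix.neg_apply]
      rw [Complex.im_sum, ← Finset.sum_add_distrib, ← Finset.sum_neg_distrib]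
      refine Finset.sum_congr rfl fun j _ => ?_
      rw [Complex.mul_im]; ring
  -- real RHS computation
  have hRHSr : ∀ p, (Matrix.fromBlocks D 0 0 D).mulVec (realify h) p
      = Sum.elim (fun i => d i * (h i).re) (fun i => d i * (h i).im) p := by
    intro p
    rw [hDd]
    cases p <;>
      simp [fromBlocks_mulVec, realify, Matrix.mulVec_diagonal, Function.comp]
  constructor
  · intro Hc
    have Hc' : ∀ i, M.mulVec h i = (d i : ℂ) * (starRingEnd ℂ) (h i) := fun i => by
      rw [congrFun Hc i, hRHSc]
    funext p
    cases p with
    | inl i =>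
      rw [hΦ (Sum.inl i), hRHSr (Sum.inl i)]
      simp only [Sum.elim_inl]
      have := congrArg Complex.re (Hc' i)
      simpa [Complex.mul_re] using this
    | inr i =>
      rw [hΦ (Sum.inr i), hRHSr (Sum.inr i)]
      simp only [Sum.elim_inr]
      have := congrArg Complex.im (Hc' i)
      simp only [Complex.mul_im, Complex.ofReal_re, Complex.ofReal_im,
        Complex.conj_re, Complex.conj_im] at this
      linarith
  · intro Hr
    funext i
    rw [hRHSc i]
    have h1 := congrFun Hr (Sum.inl i)
    have h2 := congrFun Hr (Sum.inr i)
    rw [hΦ (Sum.inl i), hRHSr (Sum.inl i)] at h1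
    rw [hΦ (Sum.inr i), hRHSr (Sum.inr i)] at h2
    simp only [Sum.elim_inl] at h1
    simp only [Sum.elim_inr] at h2
    apply Complex.ext
    · simp only [Complex.mul_re, Complex.ofReal_re, Complex.ofReal_im,
        Complex.conj_re, Complex.conj_im]
      linarith
    · simp only [Complex.mul_im, Complex.ofReal_re, Complex.ofReal_im,
        Complex.conj_re, Complex.conj_im]
      linarith
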